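/- Let H_1 and H_2 be two distinct closed subgraphs of a d-regular locally sparse graph F, each on v vertices (3 ≤ v ≤ n/2), both containing a vertex x and neither containing a vertex y adjacent to x, and sharing at least one other common vertex so that |V(H_1) ∪ V(H_2)| ≤ n−2. Then the intersection H_0 = H_1 ∩ H_2 satisfies |E(H_0)| = (d/2)|V(H_0)| − Δ/2, i.e., H_0 is also closed. -/

import Mathlib

open SimpleGraph

/-- The edge boundary of a subgraph `H` of `G`: edges of `G` with one endpoint in `H.verts`
and the other outside. -/
def edgeBoundary {V : Type*} (G : SimpleGraph V) (H : G.Subgraph) : Set (Sym2 V) :=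
  {e | ∃ u v, e = s(u, v) ∧ G.Adj u v ∧ u ∈ H.verts ∧ v ∉ H.verts}

/-- `G` is `d`-regular. -/
def IsRegularGraph {V : Type*} (G : SimpleGraph V) (d : ℕ) : Prop :=
  ∀ v, (G.neighborSet v).ncard = d

/-- `G` on `n` vertices is locally sparse: every subgraph on between 3 and `n - 3`
vertices has edge boundary of size at least `d + 1`. -/
def LocallySparse {n : ℕ} (G : SimpleGraph (Fin n)) (d : ℕ) : Prop :=
  ∀ H : G.Subgraph, 3 ≤ H.verts.ncard → H.verts.ncard ≤ n - 3 →
    d + 1 ≤ (edgeBoundary G H).ncard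

/-- `Δ = d + 1` for odd `d`, `Δ = d + 2` for even `d`. -/
def Delta (d : ℕ) : ℕ := if Odd d then d + 1 else d + 2

/-- A closed subgraph: an induced subgraph whose edge boundary has size exactly `Δ`. -/
def IsClosedSubgraph {V : Type*} (G : SimpleGraph V) (d : ℕ) (H : G.Subgraph) : Prop :=
  H.IsInduced ∧ (edgeBoundary G H).ncard = Delta d

section Aux

open Finset
open scoped Classical

variable {V : Type*} [Fintype V]

/-- Boundary edges of a vertex set, as a `Finset`. -/
noncomputable def bF (G : SimpleGraph V) (S : Set V) : Finset (Sym2 V) :=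
  Finset.univ.filter (fun e => ∃ u v, e = s(u,v) ∧ G.Adj u v ∧ u ∈ S ∧ v ∉ S)

/-- Inner edges of a vertex set, as a `Finset`. -/
noncomputable def iF (G : SimpleGraph V) (S : Set V) : Finset (Sym2 V) :=
  Finset.univ.filter (fun e => ∃ u v, e = s(u,v) ∧ G.Adj u v ∧ u ∈ S ∧ v ∈ S)

lemma mem_bF {G : SimpleGraph V} {S : Set V} {e : Sym2 V} :
    e ∈ bF G S ↔ ∃ u v, e = s(u,v) ∧ G.Adj u v ∧ u ∈ S ∧ v ∉ S := by
  simp [bF]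

lemma mem_iF {G : SimpleGraph V} {S : Set V} {e : Sym2 V} :
    e ∈ iF G S ↔ ∃ u v, e = s(u,v) ∧ G.Adj u v ∧ u ∈ S ∧ v ∈ S := by
  simp [iF]

/-- Handshake: `2·(inner edges) + (boundary) = d·|S|` for a `d`-regular graph. -/
lemma handshake (G : SimpleGraph V) {d : ℕ} (hreg : IsRegularGraph G d) (S : Set V) :
    2 * (iF G S).card + (bF G S).card = d * S.ncard := by
  classical
  set P : Finset (V × V) := (S.toFinset ×ˢ univ).filter (fun p => G.Adj p.1 p.2) with hP
  have hmemP : ∀ p : V × V, p ∈ P ↔ p.1 ∈ S ∧ G.Adj p.1 p.2 := by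
    intro p; simp [hP, Set.mem_toFinset]
  have hPcard : P.card = d * S.ncard := by
    have h1 : P.card = ∑ u ∈ S.toFinset, (P.filter (fun p => p.1 = u)).card := by
      apply card_eq_sum_card_fiberwise
      intro p hp
      rw [Finset.mem_coe, Set.mem_toFinset]
      exact ((hmemP p).mp hp).1
    have h2 : ∀ u ∈ S.toFinset, (P.filter (fun p => p.1 = u)).card = d := by
      intro u hu
      rw [Set.mem_toFinset] at hu
      have hfib : P.filter (fun p => p.1 = u) = {u} ×ˢ (univ.filter (fun w => G.Adj u w)) := by
        ext ⟨a, b⟩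
        simp only [mem_filter, mem_product, mem_singleton, mem_univ, true_and, hmemP]
        constructor
        · rintro ⟨⟨_, hab⟩, rfl⟩; exact ⟨rfl, hab⟩
        · rintro ⟨rfl, hab⟩; exact ⟨⟨hu, hab⟩, rfl⟩
      rw [hfib, card_product, card_singleton, one_mul]
      have := hreg u
      rw [Set.ncard_eq_toFinset_card'] at this
      rw [← this]
      congr 1
      ext w
      simp [Set.mem_toFinset, SimpleGraph.mem_neighborSet]
    rw [h1, Finset.sum_congr rfl h2, Finset.sum_const, smul_eq_mul,
      Set.ncard_eq_toFinset_card', mul_comm]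
  have hsplit : (P.filter (fun p => p.2 ∈ S)).card + (P.filter (fun p => ¬ p.2 ∈ S)).card
      = P.card := card_filter_add_card_filter_not _
  have hin : (P.filter (fun p => p.2 ∈ S)).card = 2 * (iF G S).card := by
    have hmap : ∀ p ∈ P.filter (fun p : V × V => p.2 ∈ S), s(p.1, p.2) ∈ iF G S := by
      intro p hp
      rw [mem_filter] at hp
      exact mem_iF.mpr ⟨p.1, p.2, rfl, ((hmemP p).mp hp.1).2, ((hmemP p).mp hp.1).1, hp.2⟩
    rw [card_eq_sum_card_fiberwise hmap]
    have h2 : ∀ e ∈ iF G S,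
        ((P.filter (fun p : V × V => p.2 ∈ S)).filter (fun p => s(p.1, p.2) = e)).card = 2 := by
      intro e he
      obtain ⟨u, w, rfl, hadj, hu, hw⟩ := mem_iF.mp he
      have hne : u ≠ w := hadj.ne
      have hfib : ((P.filter (fun p : V × V => p.2 ∈ S)).filter
          (fun p => s(p.1, p.2) = s(u, w))) = {(u, w), (w, u)} := by
        ext ⟨a, b⟩
        simp only [mem_filter, hmemP, mem_insert, mem_singleton, Prod.mk.injEq, Sym2.eq_iff]
        constructor
        · rintro ⟨⟨⟨_, _⟩, _⟩, (⟨rfl, rfl⟩ | ⟨rfl, rfl⟩)⟩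
          · left; exact ⟨rfl, rfl⟩
          · right; exact ⟨rfl, rfl⟩
        · rintro (⟨rfl, rfl⟩ | ⟨rfl, rfl⟩)
          · exact ⟨⟨⟨hu, hadj⟩, hw⟩, Or.inl ⟨rfl, rfl⟩⟩
          · exact ⟨⟨⟨hw, hadj.symm⟩, hu⟩, Or.inr ⟨rfl, rfl⟩⟩
      rw [hfib]
      exact card_pair (by simp [Prod.ext_iff, hne])
    rw [Finset.sum_congr rfl h2, Finset.sum_const, smul_eq_mul, mul_comm]
  have hbd : (P.filter (fun p => ¬ p.2 ∈ S)).card = (bF G S).card := by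
    apply card_nbij (fun p => s(p.1, p.2))
    · intro p hp
      rw [mem_coe, mem_filter] at hp
      exact mem_bF.mpr ⟨p.1, p.2, rfl, ((hmemP p).mp hp.1).2, ((hmemP p).mp hp.1).1, hp.2⟩
    · rintro ⟨a, b⟩ ha ⟨c, e⟩ hc h
      simp only [coe_filter, Set.mem_setOf_eq, hmemP] at ha hc
      rcases Sym2.eq_iff.mp h with ⟨rfl, rfl⟩ | ⟨rfl, rfl⟩
      · rfl
      · exact absurd ha.1.1 hc.2
    · rintro e he
      rw [mem_coe, mem_bF] at he
      obtain ⟨u, w, rfl, hadj, hu, hw⟩ := he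
      refine ⟨(u, w), ?_, rfl⟩
      simp only [coe_filter, Set.mem_setOf_eq, hmemP]
      exact ⟨⟨hu, hadj⟩, hw⟩
  omega

/-- Submodularity of the edge boundary. -/
lemma submod (G : SimpleGraph V) (S T : Set V) :
    (bF G (S ∩ T)).card + (bF G (S ∪ T)).card ≤ (bF G S).card + (bF G T).card := by
  rw [← card_union_add_card_inter, ← card_union_add_card_inter (bF G S)]
  refine Nat.add_le_add (card_le_card ?_) (card_le_card ?_)
  · intro e he
    rcases mem_union.mp he with he | he
    · obtain ⟨u, w, rfl, hadj, hu, hw⟩ := mem_bF.mp he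
      rcases not_and_or.mp (by simpa using hw) with h | h
      · exact mem_union_left _ (mem_bF.mpr ⟨u, w, rfl, hadj, hu.1, h⟩)
      · exact mem_union_right _ (mem_bF.mpr ⟨u, w, rfl, hadj, hu.2, h⟩)
    · obtain ⟨u, w, rfl, hadj, hu, hw⟩ := mem_bF.mp he
      rw [Set.mem_union, not_or] at hw
      rcases hu with h | h
      · exact mem_union_left _ (mem_bF.mpr ⟨u, w, rfl, hadj, h, hw.1⟩)
      · exact mem_union_right _ (mem_bF.mpr ⟨u, w, rfl, hadj, h, hw.2⟩)
  · intro e he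
    rw [mem_inter] at he
    obtain ⟨u, w, rfl, hadj, hu, hw⟩ := mem_bF.mp he.1
    obtain ⟨u', w', heq, hadj', hu', hw'⟩ := mem_bF.mp he.2
    rcases Sym2.eq_iff.mp heq with ⟨rfl, rfl⟩ | ⟨rfl, rfl⟩
    · rw [Set.mem_union, not_or] at hw'
      exact mem_inter.mpr ⟨mem_bF.mpr ⟨u, w, rfl, hadj, hu.1, hw'.1⟩,
        mem_bF.mpr ⟨u, w, rfl, hadj, hu.2, hw'.2⟩⟩
    · exact absurd (Set.mem_union_left _ hu.1) hw'

/-- The boundary of the complement equals the boundary. -/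
lemma bF_compl (G : SimpleGraph V) (S : Set V) : bF G Sᶜ = bF G S := by
  ext e
  simp only [mem_bF, Set.mem_compl_iff, not_not]
  constructor
  · rintro ⟨u, w, rfl, hadj, hu, hw⟩
    exact ⟨w, u, Sym2.eq_swap, hadj.symm, hw, hu⟩
  · rintro ⟨u, w, rfl, hadj, hu, hw⟩
    exact ⟨w, u, Sym2.eq_swap, hadj.symm, hw, hu⟩

/-- A two-vertex set spans at most one edge. -/
lemma iF_card_le_one {G : SimpleGraph V} {S : Set V} (hS : S.ncard = 2) :
    (iF G S).card ≤ 1 := by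
  obtain ⟨a, b, hab, rfl⟩ := Set.ncard_eq_two.mp hS
  have hsub : iF G {a, b} ⊆ {s(a, b)} := by
    intro e he
    obtain ⟨u, w, rfl, hadj, hu, hw⟩ := mem_iF.mp he
    have hne := hadj.ne
    rcases hu with rfl | rfl <;> rcases hw with rfl | rfl <;>
      simp_all [Sym2.eq_swap]
  simpa using card_le_card hsub

lemma edgeBoundary_ncard (G : SimpleGraph V) (H : G.Subgraph) :
    (edgeBoundary G H).ncard = (bF G H.verts).card := by
  have h : edgeBoundary G H = ↑(bF G H.verts) := by
    ext e
    simp [edgeBoundary, mem_bF]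
  rw [h, Set.ncard_coe_finset]

lemma meet_edgeSet_ncard (G : SimpleGraph V) (H₁ H₂ : G.Subgraph)
    (h1 : H₁.IsInduced) (h2 : H₂.IsInduced) :
    (H₁ ⊓ H₂).edgeSet.ncard = (iF G (H₁.verts ∩ H₂.verts)).card := by
  have h : (H₁ ⊓ H₂).edgeSet = ↑(iF G (H₁.verts ∩ H₂.verts)) := by
    ext e
    induction e using Sym2.ind with
    | _ u w =>
      rw [SimpleGraph.Subgraph.mem_edgeSet, mem_coe, mem_iF]
      constructor
      · rintro ⟨ha1, ha2⟩
        exact ⟨u, w, rfl, ha1.adj_sub, ⟨ha1.fst_mem, ha2.fst_mem⟩,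
          ⟨ha1.snd_mem, ha2.snd_mem⟩⟩
      · rintro ⟨a, b, heq, hadj, ha, hb⟩
        rcases Sym2.eq_iff.mp heq with ⟨rfl, rfl⟩ | ⟨rfl, rfl⟩
        · exact ⟨h1 ha.1 hb.1 hadj, h2 ha.2 hb.2 hadj⟩
        · exact ⟨(h1 ha.1 hb.1 hadj).symm, (h2 ha.2 hb.2 hadj).symm⟩
  rw [h, Set.ncard_coe_finset]

end Aux

/-- If `H₁ ≠ H₂` are closed subgraphs on `v` vertices (`3 ≤ v ≤ n/2`) both containing `x`,
neither containing `y` (with `x` adjacent to `y`), sharing another common vertex so that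
`|V(H₁) ∪ V(H₂)| ≤ n - 2`, then `H₀ = H₁ ⊓ H₂` satisfies `|E(H₀)| = (d/2)|V(H₀)| - Δ/2`,
i.e. `2|E(H₀)| + Δ = d|V(H₀)|`, so `H₀` is closed. -/
theorem intersection_of_closed_is_closed {n d : ℕ} (hd : 3 ≤ d) (G : SimpleGraph (Fin n))
    (hreg : IsRegularGraph G d) (hls : LocallySparse G d)
    (H₁ H₂ : G.Subgraph) (hne : H₁ ≠ H₂)
    (hH₁ : IsClosedSubgraph G d H₁) (hH₂ : IsClosedSubgraph G d H₂)
    (v : ℕ) (h3 : 3 ≤ v) (hv : 2 * v ≤ n)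
    (hv₁ : H₁.verts.ncard = v) (hv₂ : H₂.verts.ncard = v)
    (x y : Fin n) (hxy : G.Adj x y)
    (hx₁ : x ∈ H₁.verts) (hx₂ : x ∈ H₂.verts)
    (hy₁ : y ∉ H₁.verts) (hy₂ : y ∉ H₂.verts)
    (hz : ∃ z, z ≠ x ∧ z ∈ H₁.verts ∧ z ∈ H₂.verts)
    (hun : (H₁.verts ∪ H₂.verts).ncard ≤ n - 2) :
    2 * ((H₁ ⊓ H₂).edgeSet.ncard) + Delta d = d * (H₁ ⊓ H₂).verts.ncard := by
  classical
  obtain ⟨hind₁, hb₁⟩ := hH₁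
  obtain ⟨hind₂, hb₂⟩ := hH₂
  obtain ⟨z, hzx, hz₁, hz₂⟩ := hz
  -- the vertex sets are distinct
  have hST : H₁.verts ≠ H₂.verts := by
    intro h
    apply hne
    refine SimpleGraph.Subgraph.ext h ?_
    ext u w
    constructor
    · intro ha
      exact hind₂ (h ▸ ha.fst_mem) (h ▸ ha.snd_mem) ha.adj_sub
    · intro ha
      exact hind₁ (h.symm ▸ ha.fst_mem) (h.symm ▸ ha.snd_mem) ha.adj_sub
  set S := H₁.verts with hS'
  set T := H₂.verts with hT'
  -- size facts
  have hIE : (S ∩ T).ncard + (S ∪ T).ncard = v + v := by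
    rw [Set.ncard_inter_add_ncard_union, hv₁, hv₂]
  have hcap2 : 2 ≤ (S ∩ T).ncard := by
    have hsub : ({x, z} : Set (Fin n)) ⊆ S ∩ T := by
      intro a ha
      rcases ha with rfl | rfl
      · exact ⟨hx₁, hx₂⟩
      · exact ⟨hz₁, hz₂⟩
    calc 2 = ({x, z} : Set (Fin n)).ncard := (Set.ncard_pair (Ne.symm hzx)).symm
      _ ≤ (S ∩ T).ncard := Set.ncard_le_ncard hsub (Set.toFinite _)
  have hcapv : (S ∩ T).ncard ≤ v := hv₁ ▸ Set.ncard_le_ncard Set.inter_subset_left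
    (Set.toFinite _)
  have hcupv : v + 1 ≤ (S ∪ T).ncard := by
    have hss : S ⊂ S ∪ T := by
      refine ⟨Set.subset_union_left, fun hsub => ?_⟩
      have hTS : T ⊆ S := Set.subset_union_right.trans hsub
      exact hST (Set.eq_of_subset_of_ncard_le hTS (by rw [hv₁, hv₂]) (Set.toFinite _)).symm
    have := Set.ncard_lt_ncard hss (Set.toFinite _)
    omega
  -- boundaries of H₁, H₂
  have hbS : (bF G S).card = Delta d := by rw [← edgeBoundary_ncard]; exact hb₁
  have hbT : (bF G T).card = Delta d := by rw [← edgeBoundary_ncard]; exact hb₂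
  -- handshakes
  have h1 := handshake G hreg (S ∩ T)
  have h2 := handshake G hreg (S ∪ T)
  have hsubm := submod G S T
  -- lower bound on the boundary of the intersection
  have hlb1 : d + 1 ≤ (bF G (S ∩ T)).card := by
    rcases eq_or_lt_of_le hcap2 with heq | hlt
    · have hi := iF_card_le_one (G := G) heq.symm
      rw [← heq] at h1
      omega
    · have h3' : 3 ≤ (S ∩ T).ncard := hlt
      have hle : (S ∩ T).ncard ≤ n - 3 := by omega
      have hverts : (H₁ ⊓ H₂).verts = S ∩ T := rfl
      have := hls (H₁ ⊓ H₂) (by rw [hverts]; exact h3') (by rw [hverts]; exact hle)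
      rwa [edgeBoundary_ncard, hverts] at this
  -- lower bound on the boundary of the union
  have hlb2 : d + 1 ≤ (bF G (S ∪ T)).card := by
    rcases eq_or_lt_of_le hun with heq | hlt
    · -- union has n-2 vertices, complement has 2
      have hn : 6 ≤ n := by omega
      have hc : (S ∪ T)ᶜ.ncard = 2 := by
        have := Set.ncard_add_ncard_compl (S ∪ T) (Set.toFinite _) (Set.toFinite _)
        rw [Nat.card_eq_fintype_card, Fintype.card_fin] at this
        omega
      have h2' := handshake G hreg (S ∪ T)ᶜ
      rw [bF_compl, hc] at h2'
      have hi := iF_card_le_one (G := G) hc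
      omega
    · have hle : (S ∪ T).ncard ≤ n - 3 := by omega
      have h3' : 3 ≤ (S ∪ T).ncard := by omega
      have hverts : (H₁ ⊔ H₂).verts = S ∪ T := rfl
      have := hls (H₁ ⊔ H₂) (by rw [hverts]; exact h3') (by rw [hverts]; exact hle)
      rwa [edgeBoundary_ncard, hverts] at this
  -- assemble
  rw [meet_edgeSet_ncard G H₁ H₂ hind₁ hind₂]
  show 2 * (iF G (S ∩ T)).card + Delta d = d * (S ∩ T).ncard
  rcases Nat.even_or_odd d with he | ho
  · -- even case: Delta = d + 2, boundaries are even
    obtain ⟨k, hk⟩ := he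
    have hΔ : Delta d = d + 2 := by
      simp [Delta, Nat.not_odd_iff_even.mpr ⟨k, hk⟩]
    rw [hΔ] at hbS hbT ⊢
    have hE1 : ∃ m, d * (S ∩ T).ncard = 2 * m := ⟨k * (S ∩ T).ncard, by rw [hk]; ring⟩
    have hE2 : ∃ m, d * (S ∪ T).ncard = 2 * m := ⟨k * (S ∪ T).ncard, by rw [hk]; ring⟩
    obtain ⟨m1, hm1⟩ := hE1
    obtain ⟨m2, hm2⟩ := hE2
    rw [hm1] at h1 ⊢
    rw [hm2] at h2
    omega
  · have hΔ : Delta d = d + 1 := by simp [Delta, ho]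
    rw [hΔ] at hbS hbT ⊢
    omega
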